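/- There exists an absolute constant c' > 0 such that: for all η > 0 and ε > 0 with ε < 1 − 3η there exists T₀ > 0 (depending only on η, ε) such that for every T ≥ T₀, every A ∈ SL(2,ℝ) with ‖A − I‖∞ ≤ T^{-(2η+ε)}, and every u ∈ [0, T^η], there exist real numbers t', y', θ' with |t'| ≤ c'T^{-ε}, |y'| ≤ c'T^{-ε}, |θ'| ≤ c'T^{-ε} and ω(u)^{-1}·A·ω(u) = n(t')·a(y')·K(θ'). (Slow divergence of the approximate horocycle {(-1+i/T)t}.) -/

import Mathlib

open Real Matrix

/-- `n t = [[1, t], [0, 1]]`. -/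
noncomputable def n (t : ℝ) : Matrix (Fin 2) (Fin 2) ℝ := !![1, t; 0, 1]

/-- `a y = [[e^{y/2}, 0], [0, e^{-y/2}]]`. -/
noncomputable def a (y : ℝ) : Matrix (Fin 2) (Fin 2) ℝ :=
  !![Real.exp (y / 2), 0; 0, Real.exp (-y / 2)]

/-- `K θ = [[cos θ, sin θ], [-sin θ, cos θ]]`. -/
noncomputable def K (θ : ℝ) : Matrix (Fin 2) (Fin 2) ℝ :=
  !![Real.cos θ, Real.sin θ; -Real.sin θ, Real.cos θ]

/-- The maximum of the absolute values of the entries of a real 2×2 matrix. -/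
noncomputable def mnorm (M : Matrix (Fin 2) (Fin 2) ℝ) : ℝ :=
  max (max |M 0 0| |M 0 1|) (max |M 1 0| |M 1 1|)

/-- `ω T u = [[(1+u/T)^{1/2}, -u(1+u/T)^{-1/2}], [0, (1+u/T)^{-1/2}]]`. -/
noncomputable def ω (T u : ℝ) : Matrix (Fin 2) (Fin 2) ℝ :=
  !![(1 + u / T) ^ ((1 : ℝ) / 2), -u * (1 + u / T) ^ (-(1 : ℝ) / 2);
     0, (1 + u / T) ^ (-(1 : ℝ) / 2)]

lemma abs_arcsin_le_two_mul {x : ℝ} (h1 : -1 ≤ x) (h2 : x ≤ 1) : |Real.arcsin x| ≤ 2 * |x| := by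
  have key : ∀ z : ℝ, 0 ≤ z → z ≤ 1 → Real.arcsin z ≤ 2 * z := by
    intro z hz0 hz1
    have h := Real.mul_le_sin (Real.arcsin_nonneg.2 hz0) (Real.arcsin_le_pi_div_two z)
    rw [Real.sin_arcsin (by linarith) hz1] at h
    have hπ : (0:ℝ) < π := Real.pi_pos
    have hπ' : π < 3.15 := Real.pi_lt_d2
    rw [div_mul_eq_mul_div, div_le_iff₀ hπ] at h
    nlinarith [Real.arcsin_nonneg.2 hz0]
  rcases le_total 0 x with hx | hx
  · rw [abs_of_nonneg (Real.arcsin_nonneg.2 hx), abs_of_nonneg hx]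
    exact key x hx h2
  · rw [abs_of_nonpos (Real.arcsin_nonpos.2 hx), abs_of_nonpos hx, ← Real.arcsin_neg]
    exact key (-x) (by linarith) (by linarith)

set_option maxHeartbeats 1000000 in
lemma iwasawa (B : Matrix (Fin 2) (Fin 2) ℝ) (hdet : B.det = 1) (κ : ℝ)
    (hκ0 : 0 ≤ κ) (hκ : κ ≤ 1/4)
    (h00 : |B 0 0 - 1| ≤ κ) (h01 : |B 0 1| ≤ κ)
    (h10 : |B 1 0| ≤ κ) (h11 : |B 1 1 - 1| ≤ κ) :
    ∃ t' y' θ' : ℝ, |t'| ≤ 8*κ ∧ |y'| ≤ 8*κ ∧ |θ'| ≤ 8*κ ∧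
      B = n t' * a y' * K θ' := by
  rw [Matrix.det_fin_two] at hdet
  rw [Matrix.eta_fin_two B]
  set p := B 0 0 with hp; clear_value p
  set q := B 0 1 with hq; clear_value q
  set c := B 1 0 with hc; clear_value c
  set d := B 1 1 with hd; clear_value d
  clear hp hq hc hd
  have hpb := abs_le.1 h00
  have hqb := abs_le.1 h01
  have hcb := abs_le.1 h10
  have hdb := abs_le.1 h11
  have hd34 : 3/4 ≤ d := by linarith [hdb.1]
  have hd54 : d ≤ 5/4 := by linarith [hdb.2]
  set R := c^2 + d^2 with hR; clear_value R
  have hR916 : 9/16 ≤ R := by nlinarith [sq_nonneg c]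
  have hRpos : 0 < R := by linarith
  have hRdiff : |R - 1| ≤ 3*κ := by
    rw [abs_le]
    constructor <;> nlinarith [hcb.1, hcb.2, hdb.1, hdb.2, sq_nonneg c]
  set r := Real.sqrt R with hr; clear_value r
  have hrsq : r^2 = R := by rw [hr]; exact Real.sq_sqrt hRpos.le
  have hrsq' : r^2 = c^2 + d^2 := by rw [hrsq, hR]
  have hrpos : 0 < r := by rw [hr]; exact Real.sqrt_pos.2 hRpos
  have hr07 : 7/10 ≤ r := by nlinarith
  set x := -c / r with hx; clear_value x
  have hxabs : |x| ≤ κ / r := by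
    rw [hx, abs_div, abs_neg, abs_of_pos hrpos]
    exact div_le_div₀ hκ0 h10 hrpos (le_refl r)
  have hxhalf : |x| ≤ 1/2 := by
    have h1 : κ / r ≤ (1/4) / (7/10) := div_le_div₀ (by norm_num) hκ (by norm_num) hr07
    have h2 : ((1:ℝ)/4) / (7/10) ≤ 1/2 := by norm_num
    exact le_trans hxabs (le_trans h1 h2)
  have hx1 : -1 ≤ x := by linarith [(abs_le.1 hxhalf).1]
  have hx2 : x ≤ 1 := by linarith [(abs_le.1 hxhalf).2]
  set θ := Real.arcsin x with hθ; clear_value θ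
  have hsin : Real.sin θ = x := by rw [hθ]; exact Real.sin_arcsin hx1 hx2
  have hcos : Real.cos θ = d / r := by
    rw [hθ, Real.cos_arcsin]
    have h1 : 1 - x^2 = (d/r)^2 := by
      rw [hx]
      field_simp
      linear_combination hrsq'
    rw [h1, Real.sqrt_sq (by positivity)]
  set y := -Real.log R with hy; clear_value y
  have hexpneg : Real.exp (-y/2) = r := by
    have h1 : -y/2 = Real.log R / 2 := by rw [hy]; ring
    rw [h1, ← Real.log_sqrt hRpos.le, ← hr, Real.exp_log hrpos]
  have hexppos : Real.exp (y/2) = r⁻¹ := by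
    rw [show y/2 = -(-y/2) by ring, Real.exp_neg, hexpneg]
  set t := (p*c + q*d)/R with ht; clear_value t
  -- bound on t
  have htb : |t| ≤ 8*κ := by
    rw [ht, abs_div, abs_of_pos hRpos, div_le_iff₀ hRpos]
    have hpabs : |p| ≤ 5/4 := by rw [abs_le]; constructor <;> linarith [hpb.1, hpb.2]
    have hdabs : |d| ≤ 5/4 := by rw [abs_le]; constructor <;> linarith [hdb.1, hdb.2]
    have h1 : |p*c + q*d| ≤ (5/2)*κ := by
      have ha : |p*c + q*d| ≤ |p| * |c| + |q| * |d| := by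
        refine le_trans (abs_add_le _ _) ?_
        rw [abs_mul, abs_mul]
      have hb : |p| * |c| ≤ (5/4) * κ :=
        mul_le_mul hpabs h10 (abs_nonneg _) (by norm_num)
      have hc2 : |q| * |d| ≤ κ * (5/4) :=
        mul_le_mul h01 hdabs (abs_nonneg _) hκ0
      linarith
    have h2 : 0 ≤ κ * (R - 9/16) := mul_nonneg hκ0 (by linarith)
    nlinarith [h1, h2]
  -- bound on y
  have hlog1 : Real.log R ≤ 3*κ :=
    le_trans (Real.log_le_sub_one_of_pos hRpos) (by linarith [(abs_le.1 hRdiff).2])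
  have hinvR : R⁻¹ ≤ 16/9 := by
    nlinarith [mul_inv_cancel₀ hRpos.ne', (inv_pos.2 hRpos).le]
  have hlog2 : -Real.log R ≤ 6*κ := by
    have h1 := Real.log_le_sub_one_of_pos (inv_pos.2 hRpos)
    rw [Real.log_inv] at h1
    have h2 : R⁻¹ - 1 ≤ 6*κ := by
      rcases le_total R 1 with hcase | hcase
      · nlinarith [mul_inv_cancel₀ hRpos.ne', (inv_pos.2 hRpos).le, (abs_le.1 hRdiff).1]
      · nlinarith [mul_inv_cancel₀ hRpos.ne', (inv_pos.2 hRpos).le]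
    linarith
  have hyb : |y| ≤ 8*κ := by
    rw [hy, abs_le]
    constructor
    · simp only [neg_le_neg_iff]; linarith
    · linarith
  -- bound on θ
  have hθb : |θ| ≤ 8*κ := by
    have h1 : |θ| ≤ 2 * |x| := by rw [hθ]; exact abs_arcsin_le_two_mul hx1 hx2
    have h2 : κ / r ≤ κ / (7/10) := div_le_div₀ hκ0 (le_refl κ) (by norm_num) hr07
    have h3 : κ / ((7:ℝ)/10) = (10/7) * κ := by ring
    have h4 : |x| ≤ (10/7) * κ := by rw [← h3]; exact le_trans hxabs h2
    nlinarith [abs_nonneg x]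
  refine ⟨t, y, θ, htb, hyb, hθb, ?_⟩
  have hrne : r ≠ 0 := hrpos.ne'
  have hcd : c^2 + d^2 ≠ 0 := by rw [← hR]; exact hRpos.ne'
  have k1 : r⁻¹ * (d / r) = d / R := by
    rw [← hrsq, pow_two, inv_mul_eq_div, div_div]
  have k2 : r * x = -c := by rw [hx]; field_simp
  have k3 : r⁻¹ * x = -c / R := by
    rw [hx, ← hrsq, pow_two, inv_mul_eq_div, div_div]
  have k4 : r * (d / r) = d := by field_simp
  rw [n, a, K, hexppos, hexpneg, hsin, hcos, Matrix.mul_fin_two, Matrix.mul_fin_two]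
  ext i j
  fin_cases i <;> fin_cases j <;> simp
  · rw [mul_assoc t r x, k2, k1, ht, hR]
    field_simp
    linear_combination d * hdet
  · rw [mul_assoc t r (d/r), k4, k3, ht, hR]
    field_simp
    linear_combination (-c) * hdet
  · rw [k2]; ring
  · rw [k4]



lemma abs_entry_le_mnorm (M : Matrix (Fin 2) (Fin 2) ℝ) (i j : Fin 2) : |M i j| ≤ mnorm M := by
  fin_cases i <;> fin_cases j
  · exact le_max_of_le_left (le_max_left _ _)
  · exact le_max_of_le_left (le_max_right _ _)
  · exact le_max_of_le_right (le_max_left _ _)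
  · exact le_max_of_le_right (le_max_right _ _)

lemma mnorm_nonneg (M : Matrix (Fin 2) (Fin 2) ℝ) : 0 ≤ mnorm M :=
  le_trans (abs_nonneg _) (abs_entry_le_mnorm M 0 0)

lemma mnorm_le (M : Matrix (Fin 2) (Fin 2) ℝ) {b : ℝ} (h : ∀ i j, |M i j| ≤ b) : mnorm M ≤ b :=
  max_le (max_le (h 0 0) (h 0 1)) (max_le (h 1 0) (h 1 1))

lemma mnorm_mul_le (P Q : Matrix (Fin 2) (Fin 2) ℝ) :
    mnorm (P * Q) ≤ 2 * mnorm P * mnorm Q := by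
  refine mnorm_le _ fun i j => ?_
  have h : (P * Q) i j = P i 0 * Q 0 j + P i 1 * Q 1 j := by
    simp [Matrix.mul_apply, Fin.sum_univ_two]
  rw [h]
  have h1 : |P i 0 * Q 0 j| ≤ mnorm P * mnorm Q := by
    rw [abs_mul]
    exact mul_le_mul (abs_entry_le_mnorm P i 0) (abs_entry_le_mnorm Q 0 j) (abs_nonneg _)
      (mnorm_nonneg P)
  have h2 : |P i 1 * Q 1 j| ≤ mnorm P * mnorm Q := by
    rw [abs_mul]
    exact mul_le_mul (abs_entry_le_mnorm P i 1) (abs_entry_le_mnorm Q 1 j) (abs_nonneg _)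
      (mnorm_nonneg P)
  calc |P i 0 * Q 0 j + P i 1 * Q 1 j| ≤ |P i 0 * Q 0 j| + |P i 1 * Q 1 j| := abs_add_le _ _
    _ ≤ 2 * mnorm P * mnorm Q := by linarith

noncomputable def ωinv (T u : ℝ) : Matrix (Fin 2) (Fin 2) ℝ :=
  !![(1 + u / T) ^ (-(1 : ℝ) / 2), u * (1 + u / T) ^ (-(1 : ℝ) / 2);
     0, (1 + u / T) ^ ((1 : ℝ) / 2)]

lemma key_ss {v : ℝ} (hv : 0 < v) : v ^ ((1 : ℝ) / 2) * v ^ (-(1 : ℝ) / 2) = 1 := by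
  rw [← Real.rpow_add hv]
  norm_num

lemma ω_mul_ωinv {T u : ℝ} (hv : 0 < 1 + u / T) : ω T u * ωinv T u = 1 := by
  have key : (1 + u / T) ^ ((2:ℝ)⁻¹) * (1 + u / T) ^ (-(1:ℝ)/2) = 1 := by
    rw [show ((2:ℝ)⁻¹) = (1:ℝ)/2 by norm_num]; exact key_ss hv
  rw [ω, ωinv, Matrix.mul_fin_two, Matrix.one_fin_two]
  ext i j
  fin_cases i <;> fin_cases j <;> simp
  all_goals first | ring1 | linear_combination key

lemma ωinv_mul_ω {T u : ℝ} (hv : 0 < 1 + u / T) : ωinv T u * ω T u = 1 := by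
  have key : (1 + u / T) ^ ((2:ℝ)⁻¹) * (1 + u / T) ^ (-(1:ℝ)/2) = 1 := by
    rw [show ((2:ℝ)⁻¹) = (1:ℝ)/2 by norm_num]; exact key_ss hv
  rw [ω, ωinv, Matrix.mul_fin_two, Matrix.one_fin_two]
  ext i j
  fin_cases i <;> fin_cases j <;> simp
  all_goals first | ring1 | linear_combination key


/-- Slow divergence of the approximate horocycle `{(-1+i/T)t}`. -/
theorem stmt2 :
    ∃ c' > (0 : ℝ), ∀ η : ℝ, 0 < η → ∀ ε : ℝ, 0 < ε → ε < 1 - 3 * η →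
      ∃ T₀ > (0 : ℝ), ∀ T : ℝ, T₀ ≤ T →
        ∀ A : Matrix (Fin 2) (Fin 2) ℝ, A.det = 1 →
          mnorm (A - 1) ≤ T ^ (-(2 * η + ε)) →
            ∀ u : ℝ, 0 ≤ u → u ≤ T ^ η →
              ∃ t' y' θ' : ℝ, |t'| ≤ c' * T ^ (-ε) ∧ |y'| ≤ c' * T ^ (-ε) ∧
                |θ'| ≤ c' * T ^ (-ε) ∧
                (ω T u)⁻¹ * A * ω T u = n t' * a y' * K θ' := by
  refine ⟨128, by norm_num, ?_⟩
  intro η hη ε hε hεη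
  refine ⟨max 1 ((64:ℝ) ^ (1/ε)), lt_of_lt_of_le one_pos (le_max_left _ _), ?_⟩
  intro T hT A hAdet hAnorm u hu0 huη
  have hT1 : (1:ℝ) ≤ T := le_trans (le_max_left _ _) hT
  have hT0 : (0:ℝ) < T := lt_of_lt_of_le one_pos hT1
  have hTε : (64:ℝ) ≤ T ^ ε := by
    have h1 : (64:ℝ) ^ (1/ε) ≤ T := le_trans (le_max_right _ _) hT
    have h2 : ((64:ℝ) ^ (1/ε)) ^ ε ≤ T ^ ε :=
      Real.rpow_le_rpow (Real.rpow_nonneg (by norm_num) _) h1 hε.le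
    rwa [← Real.rpow_mul (by norm_num : (0:ℝ) ≤ 64), one_div,
      inv_mul_cancel₀ hε.ne', Real.rpow_one] at h2
  have hTεpos : 0 < T ^ (-ε) := Real.rpow_pos_of_pos hT0 _
  have hTnegε : T ^ (-ε) ≤ 1/64 := by
    rw [Real.rpow_neg hT0.le]
    have h1 : (0:ℝ) < T ^ ε := Real.rpow_pos_of_pos hT0 ε
    have h2 := inv_anti₀ (by norm_num : (0:ℝ) < 64) hTε
    calc (T ^ ε)⁻¹ ≤ (64:ℝ)⁻¹ := h2
      _ = 1/64 := by norm_num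
  set κ := 16 * T ^ (-ε) with hκdef
  have hκ0 : 0 ≤ κ := by positivity
  have hκ14 : κ ≤ 1/4 := by rw [hκdef]; linarith
  have hη1 : η ≤ 1 := by linarith
  have hTη0 : (0:ℝ) < T ^ η := Real.rpow_pos_of_pos hT0 _
  have hTη1 : (1:ℝ) ≤ T ^ η := by
    have h := Real.rpow_le_rpow_of_exponent_le hT1 hη.le
    rwa [Real.rpow_zero] at h
  have hTηT : T ^ η ≤ T := by
    have h := Real.rpow_le_rpow_of_exponent_le hT1 hη1
    rwa [Real.rpow_one] at h
  have huT : u ≤ T := le_trans huη hTηT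
  have hv : 0 < 1 + u / T := by positivity
  have hv1 : 1 ≤ 1 + u / T := le_add_of_nonneg_right (div_nonneg hu0 hT0.le)
  have hs'le1 : (1 + u/T) ^ (-(1:ℝ)/2) ≤ 1 :=
    Real.rpow_le_one_of_one_le_of_nonpos hv1 (by norm_num)
  have hs'pos : 0 < (1 + u/T) ^ (-(1:ℝ)/2) := Real.rpow_pos_of_pos hv _
  have hspos : 0 < (1 + u/T) ^ ((1:ℝ)/2) := Real.rpow_pos_of_pos hv _
  have hsle2 : (1 + u/T) ^ ((1:ℝ)/2) ≤ 2 := by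
    have h2 : 1 + u/T ≤ 2 := by
      have h3 : u/T ≤ 1 := div_le_one_of_le₀ huT hT0.le
      linarith
    have h3 : (1 + u/T) ^ ((1:ℝ)/2) ≤ (2:ℝ) ^ ((1:ℝ)/2) :=
      Real.rpow_le_rpow hv.le h2 (by norm_num)
    have h4 : (2:ℝ) ^ ((1:ℝ)/2) ≤ (2:ℝ) ^ (1:ℝ) :=
      Real.rpow_le_rpow_of_exponent_le one_le_two (by norm_num)
    rw [Real.rpow_one] at h4
    linarith
  have hus' : u * ((1 + u/T) ^ (-(1:ℝ)/2)) ≤ 2 * T ^ η := by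
    have h1 : u * ((1 + u/T) ^ (-(1:ℝ)/2)) ≤ T ^ η * 1 :=
      mul_le_mul huη hs'le1 hs'pos.le (by positivity)
    linarith
  have hων : mnorm (ω T u) ≤ 2 * T ^ η := by
    have b00 : |ω T u 0 0| ≤ 2 * T ^ η := by
      rw [show ω T u 0 0 = (1 + u/T) ^ ((1:ℝ)/2) from rfl, abs_of_pos hspos]
      linarith
    have b01 : |ω T u 0 1| ≤ 2 * T ^ η := by
      rw [show ω T u 0 1 = -u * (1 + u/T) ^ (-(1:ℝ)/2) from rfl, abs_mul, abs_neg,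
        abs_of_nonneg hu0, abs_of_pos hs'pos]
      exact hus'
    have b10 : |ω T u 1 0| ≤ 2 * T ^ η := by
      rw [show ω T u 1 0 = 0 from rfl, abs_zero]
      positivity
    have b11 : |ω T u 1 1| ≤ 2 * T ^ η := by
      rw [show ω T u 1 1 = (1 + u/T) ^ (-(1:ℝ)/2) from rfl, abs_of_pos hs'pos]
      linarith
    exact mnorm_le _ fun i j => by fin_cases i <;> fin_cases j <;> assumption
  have hωiν : mnorm (ωinv T u) ≤ 2 * T ^ η := by
    have b00 : |ωinv T u 0 0| ≤ 2 * T ^ η := by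
      rw [show ωinv T u 0 0 = (1 + u/T) ^ (-(1:ℝ)/2) from rfl, abs_of_pos hs'pos]
      linarith
    have b01 : |ωinv T u 0 1| ≤ 2 * T ^ η := by
      rw [show ωinv T u 0 1 = u * (1 + u/T) ^ (-(1:ℝ)/2) from rfl, abs_mul,
        abs_of_nonneg hu0, abs_of_pos hs'pos]
      exact hus'
    have b10 : |ωinv T u 1 0| ≤ 2 * T ^ η := by
      rw [show ωinv T u 1 0 = 0 from rfl, abs_zero]
      positivity
    have b11 : |ωinv T u 1 1| ≤ 2 * T ^ η := by
      rw [show ωinv T u 1 1 = (1 + u/T) ^ ((1:ℝ)/2) from rfl, abs_of_pos hspos]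
      linarith
    exact mnorm_le _ fun i j => by fin_cases i <;> fin_cases j <;> assumption
  have hωl : ωinv T u * ω T u = 1 := ωinv_mul_ω hv
  have hωr : ω T u * ωinv T u = 1 := ω_mul_ωinv hv
  have hinv : (ω T u)⁻¹ = ωinv T u := Matrix.inv_eq_right_inv hωr
  set B := ωinv T u * A * ω T u with hBdef
  have hBdet : B.det = 1 := by
    rw [hBdef, Matrix.det_mul, Matrix.det_mul, hAdet, mul_one, ← Matrix.det_mul, hωl,
      Matrix.det_one]
  have hB1 : B - 1 = ωinv T u * (A - 1) * ω T u := by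
    rw [hBdef, Matrix.mul_sub, Matrix.mul_one, Matrix.sub_mul, hωl]
  have hpow : T ^ η * T ^ η * T ^ (-(2 * η + ε)) = T ^ (-ε) := by
    rw [← Real.rpow_add hT0, ← Real.rpow_add hT0]
    congr 1
    ring
  have hmB : mnorm (B - 1) ≤ κ := by
    rw [hB1]
    have h1 : mnorm (ωinv T u * (A - 1)) ≤ 2 * (2 * T ^ η) * T ^ (-(2 * η + ε)) := by
      calc mnorm (ωinv T u * (A - 1)) ≤ 2 * mnorm (ωinv T u) * mnorm (A - 1) :=
            mnorm_mul_le _ _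
        _ ≤ 2 * (2 * T ^ η) * T ^ (-(2 * η + ε)) := by
            apply mul_le_mul (by linarith) hAnorm (mnorm_nonneg _) (by positivity)
    calc mnorm (ωinv T u * (A - 1) * ω T u)
        ≤ 2 * mnorm (ωinv T u * (A - 1)) * mnorm (ω T u) := mnorm_mul_le _ _
      _ ≤ 2 * (2 * (2 * T ^ η) * T ^ (-(2 * η + ε))) * (2 * T ^ η) := by
          apply mul_le_mul (by linarith) hων (mnorm_nonneg _) (by positivity)
      _ = 16 * (T ^ η * T ^ η * T ^ (-(2 * η + ε))) := by ring
      _ = 16 * T ^ (-ε) := by rw [hpow]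
      _ = κ := hκdef.symm
  have e00 : (B - 1) 0 0 = B 0 0 - 1 := by simp [Matrix.sub_apply, Matrix.one_apply]
  have e01 : (B - 1) 0 1 = B 0 1 := by simp [Matrix.sub_apply, Matrix.one_apply]
  have e10 : (B - 1) 1 0 = B 1 0 := by simp [Matrix.sub_apply, Matrix.one_apply]
  have e11 : (B - 1) 1 1 = B 1 1 - 1 := by simp [Matrix.sub_apply, Matrix.one_apply]
  have hb00 : |B 0 0 - 1| ≤ κ := by
    rw [← e00]; exact le_trans (abs_entry_le_mnorm _ 0 0) hmB
  have hb01 : |B 0 1| ≤ κ := by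
    rw [← e01]; exact le_trans (abs_entry_le_mnorm _ 0 1) hmB
  have hb10 : |B 1 0| ≤ κ := by
    rw [← e10]; exact le_trans (abs_entry_le_mnorm _ 1 0) hmB
  have hb11 : |B 1 1 - 1| ≤ κ := by
    rw [← e11]; exact le_trans (abs_entry_le_mnorm _ 1 1) hmB
  obtain ⟨t', y', θ', ht', hy', hθ', hfac⟩ :=
    iwasawa B hBdet κ hκ0 hκ14 hb00 hb01 hb10 hb11
  have hκ128 : 8 * κ = 128 * T ^ (-ε) := by rw [hκdef]; ring
  refine ⟨t', y', θ', by linarith, by linarith, by linarith, ?_⟩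
  rw [hinv, ← hBdef]
  exact hfac
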